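/- (Pliss Lemma) Let A, c₁, c₂ be real numbers with c₂ < c₁ ≤ A, and set θ = (c₁ − c₂)/(A − c₂) > 0. Then for every N ≥ 1 and every sequence of real numbers a₁, …, a_N with aᵢ ≤ A for all i and Σ_{i=1}^N aᵢ ≥ c₁ N, there exist at least l ≥ θN indices 1 ≤ n₁ < n₂ < ⋯ < n_l ≤ N such that for every j and every 0 ≤ n < n_j one has Σ_{i=n+1}^{n_j} aᵢ ≥ c₂ (n_j − n). -/

import Mathlib

/-- **Pliss Lemma.**  Let `c₂ < c₁ ≤ A` and `θ = (c₁ − c₂)/(A − c₂)`.  For every `N ≥ 1`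
and reals `a₁, …, a_N` with `aᵢ ≤ A` and `Σ aᵢ ≥ c₁ N`, there exist `l ≥ θ N` indices
`1 ≤ n₁ < ⋯ < n_l ≤ N` such that `Σ_{i=n+1}^{n_j} aᵢ ≥ c₂ (n_j − n)` for all `j` and all
`0 ≤ n < n_j`. -/
theorem pliss_lemma (A c₁ c₂ : ℝ) (h₁ : c₂ < c₁) (h₂ : c₁ ≤ A)
    (N : ℕ) (hN : 1 ≤ N) (a : ℕ → ℝ)
    (ha : ∀ i ∈ Finset.Icc 1 N, a i ≤ A)
    (hsum : c₁ * N ≤ ∑ i ∈ Finset.Icc 1 N, a i) :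
    0 < (c₁ - c₂) / (A - c₂) ∧
    ∃ (l : ℕ) (n : Fin l → ℕ),
      ((c₁ - c₂) / (A - c₂)) * N ≤ (l : ℝ) ∧
      StrictMono n ∧
      (∀ j, 1 ≤ n j ∧ n j ≤ N) ∧
      (∀ j, ∀ m < n j, c₂ * ((n j : ℝ) - (m : ℝ)) ≤ ∑ i ∈ Finset.Icc (m + 1) (n j), a i) := by
  classical
  have hAc : (0:ℝ) < A - c₂ := by linarith
  refine ⟨div_pos (by linarith) hAc, ?_⟩
  set S : ℕ → ℝ := fun n => ∑ i ∈ Finset.Ioc 0 n, (a i - c₂) with hSdef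
  set P : ℕ → Prop := fun n => ∀ m < n, S m ≤ S n with hPdef
  set E : Finset ℕ := (Finset.Icc 1 N).filter P with hEdef
  -- key counting claim
  have hkey : ∀ n, n ≤ N → ∀ m ≤ n,
      S m ≤ (((Finset.Icc 1 n).filter P).card : ℝ) * (A - c₂) := by
    intro n
    induction n with
    | zero =>
      intro _ m hm
      interval_cases m
      simp [hSdef]
    | succ n ih =>
      intro hn m hm
      have hn' : n ≤ N := Nat.le_of_succ_le hn
      have hsub : (Finset.Icc 1 n).filter P ⊆ (Finset.Icc 1 (n+1)).filter P :=
        Finset.filter_subset_filter _ (Finset.Icc_subset_Icc_right (Nat.le_succ n))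
      have hmono : (((Finset.Icc 1 n).filter P).card : ℝ) * (A - c₂)
          ≤ (((Finset.Icc 1 (n+1)).filter P).card : ℝ) * (A - c₂) := by
        have := Finset.card_le_card hsub
        have : (((Finset.Icc 1 n).filter P).card : ℝ)
            ≤ (((Finset.Icc 1 (n+1)).filter P).card : ℝ) := by exact_mod_cast this
        nlinarith
      rcases Nat.lt_or_ge m (n+1) with hm' | hm'
      · exact le_trans (ih hn' m (Nat.lt_succ_iff.mp hm')) hmono
      · have hmeq : m = n + 1 := le_antisymm hm hm'
        subst hmeq
        by_cases hP : P (n+1)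
        · -- n+1 is a Pliss point
          have hcard : ((Finset.Icc 1 (n+1)).filter P).card
              = ((Finset.Icc 1 n).filter P).card + 1 := by
            have h1 : Finset.Icc 1 (n+1) = insert (n+1) (Finset.Icc 1 n) := by
              ext x; simp only [Finset.mem_Icc, Finset.mem_insert]; omega
            rw [h1, Finset.filter_insert, if_pos hP, Finset.card_insert_of_notMem]
            simp [Finset.mem_filter]
          have hSrec : S (n+1) = S n + (a (n+1) - c₂) := by
            simp only [hSdef]
            rw [← Finset.sum_Ioc_succ_top (Nat.zero_le n)]
          have haA : a (n+1) ≤ A := ha (n+1) (Finset.mem_Icc.mpr ⟨by omega, hn⟩)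
          have hSn : S n ≤ (((Finset.Icc 1 n).filter P).card : ℝ) * (A - c₂) :=
            ih hn' n le_rfl
          rw [hcard]
          push_cast
          nlinarith
        · -- n+1 is not a Pliss point
          simp only [hPdef] at hP
          push_neg at hP
          obtain ⟨m', hm'lt, hm'S⟩ := hP
          have := ih hn' m' (Nat.lt_succ_iff.mp hm'lt)
          exact le_trans (le_of_lt hm'S) (le_trans this hmono)
  -- conclude on the cardinality
  have hSN : ((c₁ - c₂) * N : ℝ) ≤ S N := by
    have h1 : S N = (∑ i ∈ Finset.Icc 1 N, a i) - c₂ * N := by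
      simp only [hSdef]
      rw [Finset.sum_sub_distrib, Finset.sum_const, Nat.card_Ioc]
      have : Finset.Ioc 0 N = Finset.Icc 1 N := by
        ext x; simp [Nat.lt_iff_add_one_le]
      rw [this, Nat.sub_zero]
      ring
    rw [h1]; nlinarith
  have hEcard : ((c₁ - c₂) / (A - c₂)) * N ≤ (E.card : ℝ) := by
    have := le_trans hSN (hkey N le_rfl N le_rfl)
    rw [div_mul_eq_mul_div, div_le_iff₀ hAc]
    exact le_trans this (le_of_eq rfl)
  refine ⟨E.card, E.orderEmbOfFin rfl, hEcard, (E.orderEmbOfFin rfl).strictMono, ?_, ?_⟩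
  · intro j
    have hmem : (E.orderEmbOfFin rfl) j ∈ E := E.orderEmbOfFin_mem rfl j
    simp only [hEdef, Finset.mem_filter, Finset.mem_Icc] at hmem
    exact ⟨hmem.1.1, hmem.1.2⟩
  · intro j m hm
    have hmem : (E.orderEmbOfFin rfl) j ∈ E := E.orderEmbOfFin_mem rfl j
    simp only [hEdef, Finset.mem_filter] at hmem
    set nj := (E.orderEmbOfFin rfl) j with hnj
    have hPnj : S m ≤ S nj := hmem.2 m hm
    have hdiff : S nj - S m = ∑ i ∈ Finset.Ioc m nj, (a i - c₂) := by
      simp only [hSdef]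
      rw [← Finset.sum_Ioc_consecutive _ (Nat.zero_le m) (le_of_lt hm)]
      ring
    have h2 : ∑ i ∈ Finset.Ioc m nj, (a i - c₂)
        = (∑ i ∈ Finset.Icc (m+1) nj, a i) - c₂ * ((nj : ℝ) - m) := by
      rw [Finset.sum_sub_distrib, Finset.sum_const, Nat.card_Ioc]
      have : Finset.Ioc m nj = Finset.Icc (m+1) nj := by
        ext x; simp only [Finset.mem_Ioc, Finset.mem_Icc]; omega
      rw [this, nsmul_eq_mul, Nat.cast_sub (le_of_lt hm)]
      ring
    nlinarith [hdiff, h2]
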